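/- Let H be a complex separable infinite-dimensional Hilbert space, let E ⊆ c₀ be a Banach symmetric sequence space, and let C_E be the associated Banach symmetric ideal. If x_n ∈ C_E are positive operators with x_{n+1} ≤ x_n for all n and x_n ↓ 0 (the sequence decreases to 0 in the operator order), then the series Σ_{n=1}^∞ (x_n − x_{n+1}) converges weakly unconditionally in C_E, i.e. Σ_{n=1}^∞ |f(x_n − x_{n+1})| < ∞ for every continuous linear functional f on C_E. -/

import Mathlib

open scoped InnerProductSpace
open Filter Topology

noncomputable section

/-- The non-increasing rearrangement `x*` of a bounded real sequence:
`x*_n = inf_{|F| ≤ n} sup_{k ∉ F} |x k|`. -/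
noncomputable def decRearrange (x : ℕ → ℝ) (n : ℕ) : ℝ :=
  sInf {c : ℝ | ∃ F : Finset ℕ, F.card ≤ n ∧ ∀ k ∉ F, |x k| ≤ c}

/-- A Banach symmetric sequence space: a nonzero linear subspace of `ℓ∞` (real bounded
sequences) equipped with a complete norm such that `x* ≤ y*` pointwise and `y ∈ E` imply
`x ∈ E` with `‖x‖_E ≤ ‖y‖_E`. -/
structure BanachSymmSeqSpace where
  carrier : Set (ℕ → ℝ)
  bdd : ∀ x ∈ carrier, ∃ C : ℝ, ∀ n, |x n| ≤ C
  zero_mem : (0 : ℕ → ℝ) ∈ carrier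
  add_mem : ∀ x ∈ carrier, ∀ y ∈ carrier, x + y ∈ carrier
  smul_mem : ∀ (c : ℝ), ∀ x ∈ carrier, c • x ∈ carrier
  nontrivial : ∃ x ∈ carrier, x ≠ 0
  nrm : (ℕ → ℝ) → ℝ
  nrm_zero : nrm 0 = 0
  nrm_pos : ∀ x ∈ carrier, x ≠ 0 → 0 < nrm x
  nrm_smul : ∀ (c : ℝ), ∀ x ∈ carrier, nrm (c • x) = |c| * nrm x
  nrm_triangle : ∀ x ∈ carrier, ∀ y ∈ carrier, nrm (x + y) ≤ nrm x + nrm y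
  complete : ∀ u : ℕ → ℕ → ℝ, (∀ n, u n ∈ carrier) →
    (∀ ε : ℝ, 0 < ε → ∃ N, ∀ m ≥ N, ∀ k ≥ N, nrm (u m - u k) < ε) →
    ∃ x ∈ carrier, ∀ ε : ℝ, 0 < ε → ∃ N, ∀ m ≥ N, nrm (u m - x) < ε
  symmetric : ∀ x : ℕ → ℝ, ∀ y ∈ carrier, (∃ C : ℝ, ∀ n, |x n| ≤ C) →
    (∀ n, decRearrange x n ≤ decRearrange y n) → x ∈ carrier ∧ nrm x ≤ nrm y

/-- `E ⊆ c₀`: every element of `E` tends to zero. -/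
def BanachSymmSeqSpace.SubsetC0 (S : BanachSymmSeqSpace) : Prop :=
  ∀ x ∈ S.carrier, Filter.Tendsto x Filter.atTop (nhds 0)

/-- The Fatou property of a Banach symmetric sequence space. -/
def BanachSymmSeqSpace.Fatou (S : BanachSymmSeqSpace) : Prop :=
  ∀ a : ℕ → ℕ → ℝ, (∀ k, a k ∈ S.carrier) → (∀ k n, 0 ≤ a k n) →
    (∀ k n, a k n ≤ a (k + 1) n) → (∃ C : ℝ, ∀ k, S.nrm (a k) ≤ C) →
    ∃ b ∈ S.carrier, (∀ n, IsLUB {r : ℝ | ∃ k, r = a k n} (b n)) ∧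
      IsLUB {r : ℝ | ∃ k, r = S.nrm (a k)} (S.nrm b)

/-- `E = ℓ₂` as a set of sequences. -/
def ellTwo : Set (ℕ → ℝ) := {x : ℕ → ℝ | Summable fun n => (x n) ^ 2}

section OperatorIdeal

variable {H : Type*} [NormedAddCommGroup H] [InnerProductSpace ℂ H] [CompleteSpace H]

/-- The `n`-th singular value (approximation number) of an operator:
`s_n(x) = inf { ‖x - F‖ : rank F ≤ n }` (so `s_0(x) = ‖x‖`). For compact operators this is
the `n`-th eigenvalue (in decreasing order) of `(x*x)^{1/2}`. -/
noncomputable def singVal (x : H →L[ℂ] H) (n : ℕ) : ℝ :=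
  sInf {c : ℝ | ∃ F : H →L[ℂ] H, FiniteDimensional ℂ (LinearMap.range (F : H →ₗ[ℂ] H)) ∧
    Module.finrank ℂ (LinearMap.range (F : H →ₗ[ℂ] H)) ≤ n ∧ ‖x - F‖ = c}

/-- The Banach symmetric ideal `C_E` of compact operators whose singular value sequence
belongs to `E`. -/
def CE (S : BanachSymmSeqSpace) : Set (H →L[ℂ] H) :=
  {x | IsCompactOperator (⇑x) ∧ (fun n => singVal x n) ∈ S.carrier}

/-- The norm `‖x‖_{C_E} = ‖{s_n(x)}‖_E` of the Banach symmetric ideal `C_E`. -/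
noncomputable def CEnorm (S : BanachSymmSeqSpace) (x : H →L[ℂ] H) : ℝ :=
  S.nrm (fun n => singVal x n)

/-- A trace class operator: a compact operator with summable singular values. -/
def IsTraceClass (z : H →L[ℂ] H) : Prop :=
  IsCompactOperator (⇑z) ∧ Summable fun n => singVal z n

/-- The Köthe dual `C_E^× = { y ∈ B(H) : x y is trace class for every x ∈ C_E }`. -/
def KDual (S : BanachSymmSeqSpace) : Set (H →L[ℂ] H) :=
  {y : H →L[ℂ] H | ∀ x ∈ CE (H := H) S, IsTraceClass (x * y)}

/-- The trace of an operator computed with respect to a Hilbert basis `b`: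
`tr z = Σ_i ⟪b i, z (b i)⟫` (basis independent for trace class operators). -/
noncomputable def traceB (b : HilbertBasis ℕ ℂ H) (z : H →L[ℂ] H) : ℂ :=
  ∑' i, ⟪b i, z (b i)⟫_ℂ

/-- The weak topology `σ(C_E, C_E^×)` on `C_E`, generated by the functionals
`x ↦ tr (x y)`, `y ∈ C_E^×`. -/
noncomputable def sigmaTop (S : BanachSymmSeqSpace) (b : HilbertBasis ℕ ℂ H) :
    TopologicalSpace {x : H →L[ℂ] H // x ∈ CE (H := H) S} :=
  ⨅ y : {y : H →L[ℂ] H // y ∈ KDual (H := H) S},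
    TopologicalSpace.induced (fun x => traceB b (x.1 * y.1)) inferInstance

/-- The ball topology `b_{C_E}`: the coarsest topology in which every closed norm ball
of `(C_E, ‖·‖_{C_E})` is closed. -/
noncomputable def ballTop (S : BanachSymmSeqSpace) :
    TopologicalSpace {x : H →L[ℂ] H // x ∈ CE (H := H) S} :=
  TopologicalSpace.generateFrom
    {s | ∃ (c : {x : H →L[ℂ] H // x ∈ CE (H := H) S}) (ε : ℝ), 0 < ε ∧
      s = {y : {x : H →L[ℂ] H // x ∈ CE (H := H) S} | CEnorm S (y.1 - c.1) ≤ ε}ᶜ}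

/-- `W` is a surjective (complex-)linear isometry of the Banach symmetric ideal `C_E`. -/
def SurjLinearIsomOn (S : BanachSymmSeqSpace) (W : (H →L[ℂ] H) → (H →L[ℂ] H)) : Prop :=
  (∀ x ∈ CE (H := H) S, W x ∈ CE (H := H) S) ∧
  (∀ y ∈ CE (H := H) S, ∃ x ∈ CE (H := H) S, W x = y) ∧
  (∀ x ∈ CE (H := H) S, ∀ y ∈ CE (H := H) S, W (x + y) = W x + W y) ∧
  (∀ (c : ℂ), ∀ x ∈ CE (H := H) S, W (c • x) = c • W x) ∧
  (∀ x ∈ CE (H := H) S, CEnorm S (W x) = CEnorm S x)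

end OperatorIdeal

end


section Aux

open scoped InnerProductSpace
open Filter Topology

variable {H : Type*} [NormedAddCommGroup H] [InnerProductSpace ℂ H] [CompleteSpace H]

lemma singValSet_nonempty (x : H →L[ℂ] H) (n : ℕ) :
    {c : ℝ | ∃ F : H →L[ℂ] H, FiniteDimensional ℂ (LinearMap.range (F : H →ₗ[ℂ] H)) ∧
      Module.finrank ℂ (LinearMap.range (F : H →ₗ[ℂ] H)) ≤ n ∧ ‖x - F‖ = c}.Nonempty := by
  have h : LinearMap.range ((0 : H →L[ℂ] H) : H →ₗ[ℂ] H) = ⊥ := by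
    ext v; simp [LinearMap.mem_range, eq_comm]
  refine ⟨‖x‖, 0, ?_, ?_, by simp⟩
  · rw [h]; infer_instance
  · rw [h]; simp

lemma singValSet_bddBelow (x : H →L[ℂ] H) (n : ℕ) :
    BddBelow {c : ℝ | ∃ F : H →L[ℂ] H, FiniteDimensional ℂ (LinearMap.range (F : H →ₗ[ℂ] H)) ∧
      Module.finrank ℂ (LinearMap.range (F : H →ₗ[ℂ] H)) ≤ n ∧ ‖x - F‖ = c} :=
  ⟨0, by rintro c ⟨F, _, _, rfl⟩; positivity⟩

lemma singVal_nonneg (x : H →L[ℂ] H) (n : ℕ) : 0 ≤ singVal x n :=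
  le_csInf (singValSet_nonempty x n) (by rintro c ⟨F, _, _, rfl⟩; positivity)

lemma singVal_le_norm (x : H →L[ℂ] H) (n : ℕ) : singVal x n ≤ ‖x‖ := by
  apply csInf_le (singValSet_bddBelow x n)
  have h : LinearMap.range ((0 : H →L[ℂ] H) : H →ₗ[ℂ] H) = ⊥ := by
    ext v; simp [LinearMap.mem_range, eq_comm]
  refine ⟨0, ?_, ?_, by simp⟩
  · rw [h]; infer_instance
  · rw [h]; simp

lemma singVal_antitone (x : H →L[ℂ] H) : Antitone (singVal x) := by
  intro m n hmn
  apply le_csInf (singValSet_nonempty x m)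
  rintro c ⟨F, h1, h2, rfl⟩
  exact csInf_le (singValSet_bddBelow x n) ⟨F, h1, h2.trans hmn, rfl⟩



lemma decRearrangeSet_bddBelow (x : ℕ → ℝ) (n : ℕ) :
    BddBelow {c : ℝ | ∃ F : Finset ℕ, F.card ≤ n ∧ ∀ k ∉ F, |x k| ≤ c} := by
  refine ⟨0, ?_⟩
  rintro c ⟨F, hF, hc⟩
  obtain ⟨k, hk⟩ := F.exists_notMem
  exact le_trans (abs_nonneg _) (hc k hk)

lemma decRearrange_le {x : ℕ → ℝ} {n : ℕ} {c : ℝ} (F : Finset ℕ) (hF : F.card ≤ n)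
    (hc : ∀ k ∉ F, |x k| ≤ c) : decRearrange x n ≤ c :=
  csInf_le (decRearrangeSet_bddBelow x n) ⟨F, hF, hc⟩

lemma decRearrange_eq_of_antitone {s : ℕ → ℝ} (ha : Antitone s) (h0 : ∀ n, 0 ≤ s n) (n : ℕ) :
    decRearrange s n = s n := by
  apply le_antisymm
  · refine decRearrange_le (Finset.range n) (by simp) (fun k hk => ?_)
    rw [Finset.mem_range, not_lt] at hk
    rw [abs_of_nonneg (h0 k)]
    exact ha hk
  · refine le_csInf ⟨s 0, ∅, by simp, fun k _ => by rw [abs_of_nonneg (h0 k)]; exact ha (Nat.zero_le k)⟩ ?_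
    rintro c ⟨F, hF, hc⟩
    have : ∃ k ∈ Finset.range (n + 1), k ∉ F := by
      by_contra hcon
      push_neg at hcon
      have : Finset.range (n + 1) ⊆ F := fun k hk => hcon k hk
      have := Finset.card_le_card this
      simp at this
      omega
    obtain ⟨k, hk1, hk2⟩ := this
    rw [Finset.mem_range] at hk1
    calc s n ≤ s k := ha (by omega)
    _ ≤ |s k| := le_abs_self _
    _ ≤ c := hc k hk2




lemma norm_apply_le_of_quadform {z : H →L[ℂ] H} (hz : z.IsPositive) {c : ℝ} (hc : 0 ≤ c)
    (hq : ∀ ξ : H, Complex.re ⟪z ξ, ξ⟫_ℂ ≤ c * ‖ξ‖ ^ 2) (ξ : H) : ‖z ξ‖ ≤ c * ‖ξ‖ := by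
  have hsym : ∀ a b : H, ⟪z a, b⟫_ℂ = ⟪a, z b⟫_ℂ := hz.isSelfAdjoint.isSymmetric
  have key : ∀ a b : H, 4 * Complex.re ⟪z a, b⟫_ℂ ≤ c * (‖a‖ + ‖b‖) ^ 2 := by
    intro a b
    have e1 : ⟪z (a + b), a + b⟫_ℂ - ⟪z (a - b), a - b⟫_ℂ
        = 2 * ⟪z a, b⟫_ℂ + 2 * ⟪z b, a⟫_ℂ := by
      simp only [map_add, map_sub, inner_add_left, inner_add_right, inner_sub_left,
        inner_sub_right]
      ring
    have e2 : Complex.re ⟪z b, a⟫_ℂ = Complex.re ⟪z a, b⟫_ℂ := by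
      rw [hsym b a, ← inner_conj_symm]
      exact Complex.conj_re _
    have e3 : 4 * Complex.re ⟪z a, b⟫_ℂ
        = Complex.re ⟪z (a + b), a + b⟫_ℂ - Complex.re ⟪z (a - b), a - b⟫_ℂ := by
      have := congrArg Complex.re e1
      simp only [Complex.sub_re, Complex.add_re, Complex.mul_re] at this ⊢
      simp only [this]
      rw [show ((2:ℂ).re = 2) from rfl, show ((2:ℂ).im = 0) from rfl]
      rw [e2]; ring
    have h4 : Complex.re ⟪z (a - b), a - b⟫_ℂ ≥ 0 := hz.re_inner_nonneg_left (a - b)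
    have h5 : Complex.re ⟪z (a + b), a + b⟫_ℂ ≤ c * (‖a‖ + ‖b‖) ^ 2 := by
      calc Complex.re ⟪z (a + b), a + b⟫_ℂ ≤ c * ‖a + b‖ ^ 2 := hq (a + b)
      _ ≤ c * (‖a‖ + ‖b‖) ^ 2 := by
          apply mul_le_mul_of_nonneg_left _ hc
          apply pow_le_pow_left₀ (norm_nonneg _) (norm_add_le a b)
    linarith
  rcases eq_or_ne (z ξ) 0 with h | h
  · rw [h]; simp; positivity
  · have hzn : 0 < ‖z ξ‖ := norm_pos_iff.mpr h
    have := key ξ ((↑(‖ξ‖ / ‖z ξ‖) : ℂ) • z ξ)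
    rw [inner_smul_right] at this
    have hre : Complex.re ((↑(‖ξ‖ / ‖z ξ‖) : ℂ) * ⟪z ξ, z ξ⟫_ℂ)
        = (‖ξ‖ / ‖z ξ‖) * ‖z ξ‖ ^ 2 := by
      rw [Complex.re_ofReal_mul, inner_self_eq_norm_sq_to_K (𝕜 := ℂ)]
      norm_cast
    have hnsm : ‖(↑(‖ξ‖ / ‖z ξ‖) : ℂ) • z ξ‖ = ‖ξ‖ := by
      rw [norm_smul, Complex.norm_real, Real.norm_eq_abs,
        abs_of_nonneg (by positivity), div_mul_cancel₀ _ (ne_of_gt hzn)]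
    rw [hre, hnsm] at this
    have hξ : 0 < ‖ξ‖ := by
      rcases eq_or_lt_of_le (norm_nonneg ξ) with h0 | h0
      · exfalso; apply h; rw [show ξ = 0 from by rwa [eq_comm, norm_eq_zero] at h0]; simp
      · exact h0
    have hlhs : (‖ξ‖ / ‖z ξ‖) * ‖z ξ‖ ^ 2 = ‖ξ‖ * ‖z ξ‖ := by
      field_simp
    rw [hlhs] at this
    nlinarith



lemma exists_finrank_approx (y w F : H →L[ℂ] H) (hy : y.IsPositive)
    (hyw : (w - y).IsPositive) (n : ℕ)
    (hFfin : FiniteDimensional ℂ (LinearMap.range (F : H →ₗ[ℂ] H)))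
    (hFrk : Module.finrank ℂ (LinearMap.range (F : H →ₗ[ℂ] H)) ≤ n) :
    ∃ G : H →L[ℂ] H, FiniteDimensional ℂ (LinearMap.range (G : H →ₗ[ℂ] H)) ∧
      Module.finrank ℂ (LinearMap.range (G : H →ₗ[ℂ] H)) ≤ 2 * n ∧ ‖y - G‖ ≤ ‖w - F‖ := by
  classical
  set K : Submodule ℂ H := LinearMap.ker (F : H →ₗ[ℂ] H) with hK
  haveI : CompleteSpace K := (ContinuousLinearMap.isClosed_ker F).completeSpace_coe
  set P : H →L[ℂ] H := K.subtypeL ∘L K.orthogonalProjectionOnto with hPdef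
  have hPmem : ∀ ξ : H, P ξ ∈ K := fun ξ => (K.orthogonalProjectionOnto ξ).2
  have hFP : ∀ ξ : H, F (P ξ) = 0 := fun ξ => hPmem ξ
  have hPsa : IsSelfAdjoint P := isSelfAdjoint_starProjection K
  have hPsym : ∀ a b : H, ⟪P a, b⟫_ℂ = ⟪a, P b⟫_ℂ := hPsa.isSymmetric
  have hPnorm : ∀ ξ : H, ‖P ξ‖ ≤ ‖ξ‖ := fun ξ => by
    calc ‖P ξ‖ ≤ ‖P‖ * ‖ξ‖ := P.le_opNorm ξ
    _ ≤ 1 * ‖ξ‖ := by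
        apply mul_le_mul_of_nonneg_right _ (norm_nonneg ξ)
        calc ‖P‖ ≤ ‖K.subtypeL‖ * ‖K.orthogonalProjectionOnto‖ := ContinuousLinearMap.opNorm_comp_le _ _
        _ ≤ 1 * 1 := by
            apply mul_le_mul (Submodule.norm_subtypeL_le K) (Submodule.orthogonalProjectionOnto_norm_le K)
              (norm_nonneg (K.orthogonalProjectionOnto)) zero_le_one
        _ = 1 := by ring
    _ = ‖ξ‖ := one_mul _
  -- finrank of Kᗮ
  haveI hFfin' : FiniteDimensional ℂ (LinearMap.range (F : H →ₗ[ℂ] H)) := hFfin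
  haveI hquot : FiniteDimensional ℂ (H ⧸ K) :=
    Module.Finite.equiv (F : H →ₗ[ℂ] H).quotKerEquivRange.symm
  have hKorth : Module.finrank ℂ Kᗮ ≤ n := by
    have hinj : Function.Injective (K.mkQ.domRestrict Kᗮ) := by
      intro a b hab
      have h1 : (a : H) - b ∈ K := by
        rwa [LinearMap.domRestrict_apply, LinearMap.domRestrict_apply, Submodule.mkQ_apply,
          Submodule.mkQ_apply, Submodule.Quotient.eq] at hab
      have h2 : (a : H) - b ∈ Kᗮ := sub_mem a.2 b.2
      have h3 : (a : H) - b = 0 :=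
        Submodule.disjoint_def.mp (Submodule.orthogonal_disjoint K) _ h1 h2
      exact Subtype.ext (sub_eq_zero.mp h3)
    calc Module.finrank ℂ Kᗮ ≤ Module.finrank ℂ (H ⧸ K) :=
        LinearMap.finrank_le_finrank_of_injective hinj
    _ = Module.finrank ℂ (LinearMap.range (F : H →ₗ[ℂ] H)) :=
        ((F : H →ₗ[ℂ] H).quotKerEquivRange).finrank_eq
    _ ≤ n := hFrk
  haveI : FiniteDimensional ℂ Kᗮ := by
    have hinj : Function.Injective (K.mkQ.domRestrict Kᗮ) := by
      intro a b hab
      have h1 : (a : H) - b ∈ K := by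
        rwa [LinearMap.domRestrict_apply, LinearMap.domRestrict_apply, Submodule.mkQ_apply,
          Submodule.mkQ_apply, Submodule.Quotient.eq] at hab
      have h2 : (a : H) - b ∈ Kᗮ := sub_mem a.2 b.2
      have h3 : (a : H) - b = 0 :=
        Submodule.disjoint_def.mp (Submodule.orthogonal_disjoint K) _ h1 h2
      exact Subtype.ext (sub_eq_zero.mp h3)
    exact Module.Finite.of_injective (K.mkQ.domRestrict Kᗮ) hinj
  set G : H →L[ℂ] H := y - P ∘L (y ∘L P) with hGdef
  have horth : ∀ v : H, v - P v ∈ Kᗮ := fun v => Submodule.sub_starProjection_mem_orthogonal (K := K) v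
  have hrange : LinearMap.range (G : H →ₗ[ℂ] H) ≤ (Kᗮ.map (y : H →ₗ[ℂ] H)) ⊔ Kᗮ := by
    rintro - ⟨ξ, rfl⟩
    have hdecomp : G ξ = y (ξ - P ξ) + (y (P ξ) - P (y (P ξ))) := by
      simp only [hGdef, ContinuousLinearMap.sub_apply, ContinuousLinearMap.comp_apply, map_sub]
      abel
    rw [ContinuousLinearMap.coe_coe, hdecomp]
    exact Submodule.add_mem_sup ⟨ξ - P ξ, horth ξ, rfl⟩ (horth (y (P ξ)))
  haveI : FiniteDimensional ℂ (Kᗮ.map (y : H →ₗ[ℂ] H)) := Module.Finite.map _ _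
  haveI : FiniteDimensional ℂ ((Kᗮ.map (y : H →ₗ[ℂ] H)) ⊔ Kᗮ : Submodule ℂ H) := by
    infer_instance
  refine ⟨G, Submodule.finiteDimensional_of_le hrange, ?_, ?_⟩
  · calc Module.finrank ℂ (LinearMap.range (G : H →ₗ[ℂ] H))
        ≤ Module.finrank ℂ ((Kᗮ.map (y : H →ₗ[ℂ] H)) ⊔ Kᗮ : Submodule ℂ H) :=
          Submodule.finrank_mono hrange
    _ ≤ Module.finrank ℂ (Kᗮ.map (y : H →ₗ[ℂ] H)) + Module.finrank ℂ Kᗮ :=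
          Submodule.finrank_add_le_finrank_add_finrank _ _
    _ ≤ n + n := add_le_add ((Submodule.finrank_map_le _ _).trans hKorth) hKorth
    _ = 2 * n := by ring
  · set z : H →L[ℂ] H := P ∘L (y ∘L P) with hzdef
    have hyG : y - G = z := by
      rw [hGdef]; abel
    have hzpos : z.IsPositive := by
      have h := hy.adjoint_conj P
      rwa [hPsa.adjoint_eq] at h
    have hquad : ∀ ξ : H, Complex.re ⟪z ξ, ξ⟫_ℂ ≤ ‖w - F‖ * ‖ξ‖ ^ 2 := by
      intro ξ
      have e1 : ⟪z ξ, ξ⟫_ℂ = ⟪y (P ξ), P ξ⟫_ℂ := by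
        rw [hzdef]
        exact hPsym (y (P ξ)) ξ
      have e2 : Complex.re ⟪y (P ξ), P ξ⟫_ℂ ≤ Complex.re ⟪w (P ξ), P ξ⟫_ℂ := by
        have h0 := hyw.re_inner_nonneg_left (P ξ)
        rw [ContinuousLinearMap.sub_apply, inner_sub_left, map_sub] at h0
        simp only [RCLike.re_to_complex] at h0
        linarith
      have e3 : ⟪w (P ξ), P ξ⟫_ℂ = ⟪(w - F) (P ξ), P ξ⟫_ℂ := by
        rw [ContinuousLinearMap.sub_apply, hFP, sub_zero]
      have e4 : Complex.re ⟪(w - F) (P ξ), P ξ⟫_ℂ ≤ ‖w - F‖ * ‖ξ‖ ^ 2 := by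
        calc Complex.re ⟪(w - F) (P ξ), P ξ⟫_ℂ ≤ ‖⟪(w - F) (P ξ), P ξ⟫_ℂ‖ :=
            Complex.re_le_norm _
        _ ≤ ‖(w - F) (P ξ)‖ * ‖P ξ‖ := norm_inner_le_norm _ _
        _ ≤ (‖w - F‖ * ‖P ξ‖) * ‖P ξ‖ :=
            mul_le_mul_of_nonneg_right ((w - F).le_opNorm _) (norm_nonneg _)
        _ ≤ (‖w - F‖ * ‖ξ‖) * ‖ξ‖ := by
            apply mul_le_mul (mul_le_mul_of_nonneg_left (hPnorm ξ) (norm_nonneg _)) (hPnorm ξ)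
              (norm_nonneg _) (by positivity)
        _ = ‖w - F‖ * ‖ξ‖ ^ 2 := by ring
      rw [e1]
      calc Complex.re ⟪y (P ξ), P ξ⟫_ℂ ≤ Complex.re ⟪w (P ξ), P ξ⟫_ℂ := e2
      _ = Complex.re ⟪(w - F) (P ξ), P ξ⟫_ℂ := by rw [e3]
      _ ≤ ‖w - F‖ * ‖ξ‖ ^ 2 := e4
    rw [hyG]
    exact ContinuousLinearMap.opNorm_le_bound _ (norm_nonneg _)
      (norm_apply_le_of_quadform hzpos (norm_nonneg _) hquad)

lemma isCompactOperator_of_finDimRange (G : H →L[ℂ] H)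
    (h : FiniteDimensional ℂ (LinearMap.range (G : H →ₗ[ℂ] H))) : IsCompactOperator ⇑G := by
  rw [isCompactOperator_iff_exists_mem_nhds_image_subset_compact]
  refine ⟨Metric.closedBall 0 1, Metric.closedBall_mem_nhds 0 one_pos,
    Subtype.val '' Metric.closedBall (0 : LinearMap.range (G : H →ₗ[ℂ] H)) ‖G‖, ?_, ?_⟩
  · exact ((ProperSpace.isCompact_closedBall _ _).image continuous_subtype_val)
  · rintro - ⟨ξ, hξ, rfl⟩
    refine ⟨⟨G ξ, LinearMap.mem_range_self _ ξ⟩, ?_, rfl⟩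
    rw [Metric.mem_closedBall, dist_zero_right]
    rw [Metric.mem_closedBall, dist_zero_right] at hξ
    calc ‖(⟨G ξ, LinearMap.mem_range_self _ ξ⟩ : LinearMap.range (G : H →ₗ[ℂ] H))‖ = ‖G ξ‖ := rfl
    _ ≤ ‖G‖ * ‖ξ‖ := G.le_opNorm ξ
    _ ≤ ‖G‖ * 1 := mul_le_mul_of_nonneg_left hξ (norm_nonneg G)
    _ = ‖G‖ := mul_one _

lemma singVal_two_mul_le {y w : H →L[ℂ] H} (hy : y.IsPositive) (hyw : (w - y).IsPositive)
    (n : ℕ) : singVal y (2 * n) ≤ singVal w n := by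
  apply le_csInf (singValSet_nonempty w n)
  rintro c ⟨F, h1, h2, rfl⟩
  obtain ⟨G, hG1, hG2, hG3⟩ := exists_finrank_approx y w F hy hyw n h1 h2
  exact le_trans (csInf_le (singValSet_bddBelow y (2 * n)) ⟨G, hG1, hG2, rfl⟩) hG3

lemma isCompactOperator_dominated {y w : H →L[ℂ] H} (hy : y.IsPositive)
    (hyw : (w - y).IsPositive) (hw0 : Tendsto (fun n => singVal w n) atTop (nhds 0)) :
    IsCompactOperator ⇑y := by
  have hG : ∀ k : ℕ, ∃ G : H →L[ℂ] H, IsCompactOperator ⇑G ∧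
      ‖y - G‖ < singVal w k + 1 / (k + 1) := by
    intro k
    have hlt : singVal w k < singVal w k + 1 / (k + 1) := by
      have : (0:ℝ) < 1 / (k + 1) := by positivity
      linarith
    obtain ⟨c, ⟨F, h1, h2, rfl⟩, hc⟩ := exists_lt_of_csInf_lt (singValSet_nonempty w k) hlt
    obtain ⟨G, hG1, hG2, hG3⟩ := exists_finrank_approx y w F hy hyw k h1 h2
    exact ⟨G, isCompactOperator_of_finDimRange G hG1, lt_of_le_of_lt hG3 hc⟩
  choose G hGc hGn using hG
  have htend : Tendsto G atTop (nhds y) := by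
    rw [tendsto_iff_norm_sub_tendsto_zero]
    apply squeeze_zero (g := fun k : ℕ => singVal w k + 1 / (k + 1))
      (fun k => norm_nonneg _)
      (fun k => by rw [norm_sub_rev]; exact le_of_lt (hGn k)) ?_
    have h1 : Tendsto (fun k : ℕ => 1 / ((k:ℝ) + 1)) atTop (nhds 0) :=
      tendsto_one_div_add_atTop_nhds_zero_nat
    have := hw0.add h1
    simpa using this
  exact isCompactOperator_of_tendsto htend (Eventually.of_forall hGc)

lemma nrm_nonneg (S : BanachSymmSeqSpace) {a : ℕ → ℝ} (ha : a ∈ S.carrier) : 0 ≤ S.nrm a := by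
  rcases eq_or_ne a 0 with rfl | h
  · rw [S.nrm_zero]
  · exact le_of_lt (S.nrm_pos a ha h)

/-- Key domination lemma: if `0 ≤ y ≤ w` and `w ∈ C_E` then `y ∈ C_E` with
`‖y‖ ≤ 2‖w‖`. -/
lemma CE_dominated (S : BanachSymmSeqSpace) (hc0 : S.SubsetC0) {y w : H →L[ℂ] H}
    (hw : w ∈ CE (H := H) S) (hy : y.IsPositive) (hyw : (w - y).IsPositive) :
    y ∈ CE (H := H) S ∧ CEnorm S y ≤ 2 * CEnorm S w := by
  obtain ⟨hwc, hws⟩ := hw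
  set s : ℕ → ℝ := fun n => singVal w n with hs
  have hs_anti : Antitone s := singVal_antitone w
  have hs_nonneg : ∀ n, 0 ≤ s n := singVal_nonneg w
  have hycompact : IsCompactOperator ⇑y :=
    isCompactOperator_dominated hy hyw (hc0 _ hws)
  set s1 : ℕ → ℝ := fun k => if Even k then s (k / 2) else 0 with hs1
  set s2 : ℕ → ℝ := fun k => if Even k then 0 else s (k / 2) with hs2
  have hs1_mem : s1 ∈ S.carrier ∧ S.nrm s1 ≤ S.nrm s := by
    apply S.symmetric s1 s hws
    · exact ⟨s 0, fun n => by
        rw [hs1]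
        dsimp only
        split
        · rw [abs_of_nonneg (hs_nonneg _)]; exact hs_anti (Nat.zero_le _)
        · rw [abs_zero]; exact hs_nonneg 0⟩
    · intro n
      rw [decRearrange_eq_of_antitone hs_anti hs_nonneg n]
      apply decRearrange_le ((Finset.range n).image (fun m => 2 * m))
        (le_trans (Finset.card_image_le) (by simp))
      intro k hk
      rw [hs1]
      dsimp only
      split
      · next hev =>
        rw [abs_of_nonneg (hs_nonneg _)]
        apply hs_anti
        by_contra hcon
        push_neg at hcon
        apply hk
        rw [Finset.mem_image]
        exact ⟨k / 2, Finset.mem_range.mpr hcon, (Nat.two_mul_div_two_of_even hev)⟩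
      · rw [abs_zero]; exact hs_nonneg n
  have hs2_mem : s2 ∈ S.carrier ∧ S.nrm s2 ≤ S.nrm s := by
    apply S.symmetric s2 s hws
    · exact ⟨s 0, fun n => by
        rw [hs2]
        dsimp only
        split
        · rw [abs_zero]; exact hs_nonneg 0
        · rw [abs_of_nonneg (hs_nonneg _)]; exact hs_anti (Nat.zero_le _)⟩
    · intro n
      rw [decRearrange_eq_of_antitone hs_anti hs_nonneg n]
      apply decRearrange_le ((Finset.range n).image (fun m => 2 * m + 1))
        (le_trans (Finset.card_image_le) (by simp))
      intro k hk
      rw [hs2]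
      dsimp only
      split
      · rw [abs_zero]; exact hs_nonneg n
      · next hodd =>
        rw [abs_of_nonneg (hs_nonneg _)]
        apply hs_anti
        rw [Nat.not_even_iff_odd] at hodd
        obtain ⟨m, rfl⟩ := hodd
        have hm : (2 * m + 1) / 2 = m := by omega
        rw [hm]
        by_contra hcon
        push_neg at hcon
        exact hk (Finset.mem_image.mpr ⟨m, Finset.mem_range.mpr hcon, rfl⟩)
  set Ds : ℕ → ℝ := s1 + s2 with hDs
  have hDs_apply : ∀ k, Ds k = s (k / 2) := by
    intro k
    rw [hDs]
    simp only [Pi.add_apply, hs1, hs2]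
    rcases Nat.even_or_odd k with hev | hodd
    · rw [if_pos hev, if_pos hev, add_zero]
    · rw [← Nat.not_even_iff_odd] at hodd
      rw [if_neg hodd, if_neg hodd, zero_add]
  have hDs_mem : Ds ∈ S.carrier := S.add_mem s1 hs1_mem.1 s2 hs2_mem.1
  have hDs_nrm : S.nrm Ds ≤ 2 * S.nrm s := by
    calc S.nrm Ds ≤ S.nrm s1 + S.nrm s2 := S.nrm_triangle s1 hs1_mem.1 s2 hs2_mem.1
    _ ≤ S.nrm s + S.nrm s := add_le_add hs1_mem.2 hs2_mem.2
    _ = 2 * S.nrm s := by ring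
  have hDs_anti : Antitone Ds := by
    intro m k hmk
    rw [hDs_apply, hDs_apply]
    exact hs_anti (Nat.div_le_div_right hmk)
  have hDs_nonneg : ∀ k, 0 ≤ Ds k := fun k => by rw [hDs_apply]; exact hs_nonneg _
  have hy_anti : Antitone (fun n => singVal y n) := singVal_antitone y
  have hy_nonneg : ∀ n, 0 ≤ singVal y n := singVal_nonneg y
  have hcmp : ∀ n, decRearrange (fun n => singVal y n) n ≤ decRearrange Ds n := by
    intro n
    rw [decRearrange_eq_of_antitone hy_anti hy_nonneg n,
      decRearrange_eq_of_antitone hDs_anti hDs_nonneg n, hDs_apply]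
    calc singVal y n ≤ singVal y (2 * (n / 2)) := hy_anti (by omega : 2 * (n / 2) ≤ n)
    _ ≤ singVal w (n / 2) := singVal_two_mul_le hy hyw (n / 2)
  have hfin := S.symmetric (fun n => singVal y n) Ds hDs_mem
    ⟨‖y‖, fun n => by rw [abs_of_nonneg (hy_nonneg n)]; exact singVal_le_norm y n⟩ hcmp
  refine ⟨⟨hycompact, hfin.1⟩, ?_⟩
  calc CEnorm S y ≤ S.nrm Ds := hfin.2
  _ ≤ 2 * S.nrm s := hDs_nrm
  _ = 2 * CEnorm S w := rfl

end Aux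

/-- If `x_n ∈ C_E` are positive operators decreasing to `0` in the
operator order, then the series `Σ (x_n − x_{n+1})` converges weakly unconditionally in
`C_E`: `Σ |f(x_n − x_{n+1})| < ∞` for every continuous linear functional `f` on `C_E`. -/
theorem decreasing_differences_weakly_unconditional
    {H : Type*} [NormedAddCommGroup H] [InnerProductSpace ℂ H] [CompleteSpace H]
    [TopologicalSpace.SeparableSpace H] (hinf : ¬ FiniteDimensional ℂ H)
    (S : BanachSymmSeqSpace) (hc0 : S.SubsetC0)
    (x : ℕ → H →L[ℂ] H) (hmem : ∀ n, x n ∈ CE (H := H) S)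
    (hpos : ∀ n, (x n).IsPositive)
    (hdec : ∀ n, (x n - x (n + 1)).IsPositive)
    (hinf0 : ∀ z : H →L[ℂ] H, (∀ n, (x n - z).IsPositive) → (-z).IsPositive) :
    ∀ f : (H →L[ℂ] H) → ℂ,
      (∀ a ∈ CE (H := H) S, ∀ b ∈ CE (H := H) S, f (a + b) = f a + f b) →
      (∀ (c : ℂ), ∀ a ∈ CE (H := H) S, f (c • a) = c * f a) →
      (∃ M : ℝ, ∀ a ∈ CE (H := H) S, ‖f a‖ ≤ M * CEnorm S a) →
      Summable fun n => ‖f (x n - x (n + 1))‖ := by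
  classical
  intro f hadd hsmul hbound
  obtain ⟨M, hM⟩ := hbound
  set d : ℕ → H →L[ℂ] H := fun n => x n - x (n + 1) with hd
  have hdpos : ∀ n, (d n).IsPositive := hdec
  have hsum_pos : ∀ G : Finset ℕ, (∑ n ∈ G, d n).IsPositive := by
    intro G
    induction G using Finset.induction with
    | empty => simpa using ContinuousLinearMap.isPositive_zero
    | insert _ _ h ih =>
      rw [Finset.sum_insert h]
      exact (hdpos _).add ih
  have htel : ∀ N, ∑ n ∈ Finset.range N, d n = x 0 - x N := by
    intro N
    induction N with
    | zero => simp
    | succ N ih =>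
      rw [Finset.sum_range_succ, ih]
      simp only [hd]
      abel
  have hx0sub : ∀ G : Finset ℕ, (x 0 - ∑ n ∈ G, d n).IsPositive := by
    intro G
    obtain ⟨N, hGN⟩ := G.exists_nat_subset_range
    have hsd := Finset.sum_sdiff (f := d) hGN
    have h1 : x 0 - ∑ n ∈ G, d n = (∑ n ∈ Finset.range N \ G, d n) + x N := by
      have h2 : (∑ n ∈ Finset.range N \ G, d n) = x 0 - x N - ∑ n ∈ G, d n := by
        rw [← htel N, ← hsd]; abel
      rw [h2]; abel
    rw [h1]
    exact (hsum_pos _).add (hpos N)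
  have hGmem : ∀ G : Finset ℕ, (∑ n ∈ G, d n) ∈ CE (H := H) S ∧
      CEnorm S (∑ n ∈ G, d n) ≤ 2 * CEnorm S (x 0) :=
    fun G => CE_dominated S hc0 (hmem 0) (hsum_pos G) (hx0sub G)
  have hdmem : ∀ n, d n ∈ CE (H := H) S := by
    intro n
    have hxd : x n - d n = x (n + 1) := sub_sub_cancel _ _
    exact (CE_dominated S hc0 (hmem n) (hdpos n) (by rw [hxd]; exact hpos (n + 1))).1
  have f_sum : ∀ G : Finset ℕ, f (∑ n ∈ G, d n) = ∑ n ∈ G, f (d n) := by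
    intro G
    induction G using Finset.induction with
    | empty =>
      have h0 : f 0 = 0 := by
        have := hsmul 0 (x 0) (hmem 0)
        rwa [zero_smul, zero_mul] at this
      simpa using h0
    | insert a G' h ih =>
      rw [Finset.sum_insert h, Finset.sum_insert h, hadd _ (hdmem a) _ (hGmem G').1, ih]
  set B : ℝ := 2 * |M| * CEnorm S (x 0) with hB
  have hfB : ∀ G : Finset ℕ, ‖f (∑ n ∈ G, d n)‖ ≤ B := by
    intro G
    have hnn : 0 ≤ CEnorm S (∑ n ∈ G, d n) := nrm_nonneg S (hGmem G).1.2
    calc ‖f (∑ n ∈ G, d n)‖ ≤ M * CEnorm S (∑ n ∈ G, d n) := hM _ (hGmem G).1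
    _ ≤ |M| * CEnorm S (∑ n ∈ G, d n) := mul_le_mul_of_nonneg_right (le_abs_self M) hnn
    _ ≤ |M| * (2 * CEnorm S (x 0)) := mul_le_mul_of_nonneg_left (hGmem G).2 (abs_nonneg M)
    _ = B := by rw [hB]; ring
  have hpart : ∀ (g : ℂ →ₗ[ℝ] ℝ), (∀ z : ℂ, |g z| ≤ ‖z‖) →
      ∀ N, ∑ n ∈ Finset.range N, |g (f (d n))| ≤ 2 * B := by
    intro g hg N
    set Gp := (Finset.range N).filter (fun n => 0 ≤ g (f (d n))) with hGp
    set Gm := (Finset.range N).filter (fun n => ¬ 0 ≤ g (f (d n))) with hGm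
    have hsplit : ∑ n ∈ Finset.range N, |g (f (d n))|
        = ∑ n ∈ Gp, |g (f (d n))| + ∑ n ∈ Gm, |g (f (d n))| :=
      (Finset.sum_filter_add_sum_filter_not _ _ _).symm
    have hp : ∑ n ∈ Gp, |g (f (d n))| ≤ B := by
      have e1 : ∑ n ∈ Gp, |g (f (d n))| = g (f (∑ n ∈ Gp, d n)) := by
        rw [f_sum, map_sum]
        exact Finset.sum_congr rfl fun n hn => abs_of_nonneg (Finset.mem_filter.mp hn).2
      rw [e1]
      exact le_trans (le_trans (le_abs_self _) (hg _)) (hfB Gp)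
    have hm : ∑ n ∈ Gm, |g (f (d n))| ≤ B := by
      have e1 : ∑ n ∈ Gm, |g (f (d n))| = -(g (f (∑ n ∈ Gm, d n))) := by
        rw [f_sum, map_sum, ← Finset.sum_neg_distrib]
        exact Finset.sum_congr rfl fun n hn => abs_of_neg
          (lt_of_not_ge (Finset.mem_filter.mp hn).2)
      rw [e1]
      exact le_trans (le_trans (neg_le_abs _) (hg _)) (hfB Gm)
    linarith
  apply summable_of_sum_range_le (c := 2 * B + 2 * B) (fun n => norm_nonneg _)
  intro N
  have hre := hpart Complex.reLm (fun z => by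
    exact Complex.abs_re_le_norm z) N
  have him := hpart Complex.imLm (fun z => by
    exact Complex.abs_im_le_norm z) N
  calc ∑ n ∈ Finset.range N, ‖f (d n)‖
      ≤ ∑ n ∈ Finset.range N, (|Complex.reLm (f (d n))| + |Complex.imLm (f (d n))|) := by
        apply Finset.sum_le_sum
        intro n _
        exact Complex.norm_le_abs_re_add_abs_im _
  _ = (∑ n ∈ Finset.range N, |Complex.reLm (f (d n))|)
      + ∑ n ∈ Finset.range N, |Complex.imLm (f (d n))| := Finset.sum_add_distrib
  _ ≤ 2 * B + 2 * B := add_le_add hre him
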